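/- arXiv:1907.13254 — 3 statements merged into one kernel-verified Lean document; each statement's English description precedes it below -/
import Mathlib

section
/- For n = 2, 𝒜(gl_2) is the internal direct sum of the ℂ-subspaces U_2 and U_2·𝒱_2 = {u ∘ 𝒱_2 : u ∈ U_2}; that is, 𝒜(gl_2) = U_2 + U_2·𝒱_2 and U_2 ∩ U_2·𝒱_2 = {0}, so every element of 𝒜(gl_2) is uniquely of the form u + v ∘ 𝒱_2 with u, v ∈ U_2. -/
open scoped BigOperators
open MvPolynomial

set_option maxHeartbeats 1000000
set_option synthInstance.maxHeartbeats 200000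

noncomputable section

/-- The polynomial ring `Λ = ℂ[x_{ki}]` (variables indexed by pairs `(k, i)`). -/
abbrev Lam : Type := MvPolynomial (ℕ × ℕ) ℂ

/-- `L`, the field of fractions of `Λ`. -/
abbrev L : Type := FractionRing Lam

/-- The variable `x_{ki}` as an element of `L`. -/
def x (k i : ℕ) : L := algebraMap Lam L (X (k, i))

/-- The algebra automorphism of `Λ` sending `x_v ↦ x_v - 1` and fixing the other variables. -/
def shiftEquiv (v : ℕ × ℕ) : Lam ≃ₐ[ℂ] Lam :=
  AlgEquiv.ofAlgHom
    (aeval (fun w => if w = v then X w - 1 else X w))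
    (aeval (fun w => if w = v then X w + 1 else X w))
    (by apply MvPolynomial.algHom_ext; intro w; by_cases h : w = v <;> simp [h])
    (by apply MvPolynomial.algHom_ext; intro w; by_cases h : w = v <;> simp [h])

/-- The automorphism `δ^{ki}` of `L`, determined by `δ^{ki}(x_{ℓj}) = x_{ℓj} - δ_{ℓk}δ_{ij}`. -/
def δ (k i : ℕ) : L ≃ₐ[ℂ] L := IsFractionRing.algEquivOfAlgEquiv (shiftEquiv (k, i))

/-- Multiplication by `a ∈ L` as a `ℂ`-linear endomorphism `m_a` of `L`. -/
def mulOp (a : L) : Module.End ℂ L := LinearMap.mulLeft ℂ a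

/-- A field automorphism of `L` as a `ℂ`-linear endomorphism of `L`. -/
def lin (e : L ≃ₐ[ℂ] L) : Module.End ℂ L := e.toLinearMap

/-- The rational function `a_{ki}^+`. -/
def aP (k i : ℕ) : L :=
  -((∏ j ∈ Finset.Icc 1 (k + 1), (x (k + 1) j - x k i)) /
    ∏ j ∈ (Finset.Icc 1 k).erase i, (x k j - x k i))

/-- The rational function `a_{ki}^-`. -/
def aM (k i : ℕ) : L :=
  (∏ j ∈ Finset.Icc 1 (k - 1), (x (k - 1) j - x k i)) /
    ∏ j ∈ (Finset.Icc 1 k).erase i, (x k j - x k i)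

/-- The operator `A_{ki}^+ = δ^{ki} ∘ m_{a_{ki}^+}`. -/
def Ap (k i : ℕ) : Module.End ℂ L := lin (δ k i) * mulOp (aP k i)

/-- The operator `A_{ki}^- = (δ^{ki})^{-1} ∘ m_{a_{ki}^-}`. -/
def Am (k i : ℕ) : Module.End ℂ L := lin (δ k i).symm * mulOp (aM k i)

/-- The operator `X_k^+ = ∑_{i=1}^k A_{ki}^+`. -/
def Xp (k : ℕ) : Module.End ℂ L := ∑ i ∈ Finset.Icc 1 k, Ap k i

/-- The operator `X_k^- = ∑_{i=1}^k A_{ki}^-`. -/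
def Xm (k : ℕ) : Module.End ℂ L := ∑ i ∈ Finset.Icc 1 k, Am k i

/-- The operator `X_{kk}`. -/
def Xd (k : ℕ) : Module.End ℂ L :=
  mulOp ((∑ j ∈ Finset.Icc 1 k, (x k j + (j : L) - 1)) -
    ∑ i ∈ Finset.Icc 1 (k - 1), (x (k - 1) i + (i : L) - 1))

/-- The Vandermonde polynomial `∏_{1 ≤ i < j ≤ k} (x_{ki} - x_{kj})`, as an element of `L`. -/
def vand (k : ℕ) : L :=
  ∏ p ∈ (Finset.Icc 1 k ×ˢ Finset.Icc 1 k).filter (fun p => p.1 < p.2),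
    (x k p.1 - x k p.2)

/-- The operator `𝒱_k = m_{∏_{i<j}(x_{ki} - x_{kj})}`. -/
def Vop (k : ℕ) : Module.End ℂ L := mulOp (vand k)

/-- The generating set of `U_n`: the `X_k^±` for `1 ≤ k ≤ n-1` and the `X_{kk}` for `1 ≤ k ≤ n`. -/
def Ugens (n : ℕ) : Set (Module.End ℂ L) :=
  {u | ∃ k, 1 ≤ k ∧ k + 1 ≤ n ∧ (u = Xp k ∨ u = Xm k)} ∪
    {u | ∃ k, 1 ≤ k ∧ k ≤ n ∧ u = Xd k}

/-- `U_n`, the Gelfand–Tsetlin realization of `U(gl_n)` inside `End_ℂ(L)`. -/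
def Ualg (n : ℕ) : Subalgebra ℂ (Module.End ℂ L) := Algebra.adjoin ℂ (Ugens n)

/-- `𝒜(gl_n)`, the subalgebra generated by `U_n` together with `𝒱_2, …, 𝒱_n`. -/
def Agl (n : ℕ) : Subalgebra ℂ (Module.End ℂ L) :=
  Algebra.adjoin ℂ (Ugens n ∪ {u | ∃ k, 2 ≤ k ∧ k ≤ n ∧ u = Vop k})


namespace Agl2

open Module

lemma mulOp_mul (a b : L) : mulOp a * mulOp b = mulOp (a * b) := by
  ext z; simp [mulOp, Module.End.mul_apply, mul_assoc]

lemma mulOp_one : mulOp (1 : L) = 1 := by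
  ext z; simp [mulOp]

lemma mulOp_add (a b : L) : mulOp (a + b) = mulOp a + mulOp b := by
  ext z; simp [mulOp, add_mul]

lemma mulOp_sub (a b : L) : mulOp (a - b) = mulOp a - mulOp b := by
  ext z; simp [mulOp, sub_mul]

lemma mulOp_neg (a : L) : mulOp (-a) = -(mulOp a) := by
  ext z
  show -a * z = -(a * z)
  ring

lemma mulOp_comm (a b : L) : mulOp a * mulOp b = mulOp b * mulOp a := by
  rw [mulOp_mul, mulOp_mul, mul_comm]

lemma lin_mul_mulOp (e : L ≃ₐ[ℂ] L) (a : L) :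
    lin e * mulOp a = mulOp (e a) * lin e := by
  ext z; simp [lin, mulOp, Module.End.mul_apply, map_mul]

lemma lin_mul_lin (e f : L ≃ₐ[ℂ] L) : lin e * lin f = lin (f.trans e) := by
  ext z; simp [lin, Module.End.mul_apply]

lemma lin_mul_symm (e : L ≃ₐ[ℂ] L) : lin e * lin e.symm = 1 := by
  ext z; simp [lin, Module.End.mul_apply]

lemma symm_mul_lin (e : L ≃ₐ[ℂ] L) : lin e.symm * lin e = 1 := by
  ext z; simp [lin, Module.End.mul_apply]

lemma comm_symm (e : L ≃ₐ[ℂ] L) (A : Module.End ℂ L)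
    (h : lin e * A = A * lin e) : lin e.symm * A = A * lin e.symm := by
  calc lin e.symm * A = lin e.symm * A * (lin e * lin e.symm) := by
        rw [lin_mul_symm, mul_one]
    _ = lin e.symm * (A * lin e) * lin e.symm := by simp only [mul_assoc]
    _ = lin e.symm * (lin e * A) * lin e.symm := by rw [h]
    _ = (lin e.symm * lin e) * A * lin e.symm := by simp only [mul_assoc]
    _ = A * lin e.symm := by rw [symm_mul_lin, one_mul]

/-- Extensionality for algebra automorphisms of `L`. -/
lemma L_ext {e f : L ≃ₐ[ℂ] L}
    (h : ∀ v : ℕ × ℕ, e (algebraMap Lam L (X v)) = f (algebraMap Lam L (X v))) :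
    e = f := by
  have key : (e : L →+* L) = (f : L →+* L) := by
    apply IsLocalization.ringHom_ext (nonZeroDivisors Lam)
    apply MvPolynomial.ringHom_ext
    · intro c
      have hc : algebraMap Lam L (C c) = algebraMap ℂ L c := by
        have h1 : (C c : Lam) = algebraMap ℂ Lam c := rfl
        rw [h1, ← IsScalarTower.algebraMap_apply]
      simp only [RingHom.comp_apply, RingHom.coe_coe, hc, AlgEquiv.commutes]
    · intro v
      simp only [RingHom.comp_apply, RingHom.coe_coe]
      exact h v
  exact AlgEquiv.ext fun z => DFunLike.congr_fun key z

lemma δ_x (k i l j : ℕ) :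
    δ k i (x l j) = if (l, j) = (k, i) then x l j - 1 else x l j := by
  unfold δ x
  rw [IsFractionRing.algEquivOfAlgEquiv_algebraMap]
  have : shiftEquiv (k, i) (X (l, j)) =
      if (l, j) = (k, i) then X (l, j) - 1 else X (l, j) := by
    simp [shiftEquiv]
  rw [this]
  split <;> simp [map_sub, map_one]

/-- The swap automorphism of `Λ` exchanging `x_{21}` and `x_{22}`. -/
def τ : Lam ≃ₐ[ℂ] Lam := MvPolynomial.renameEquiv ℂ (Equiv.swap ((2:ℕ),(1:ℕ)) ((2:ℕ),(2:ℕ)))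

/-- The swap automorphism of `L`. -/
def σ : L ≃ₐ[ℂ] L := IsFractionRing.algEquivOfAlgEquiv τ


/-- General form of `δ_x`. -/
lemma δ_X (k i : ℕ) (w : ℕ × ℕ) :
    δ k i (algebraMap Lam L (X w)) =
      if w = (k, i) then algebraMap Lam L (X w) - 1 else algebraMap Lam L (X w) := by
  unfold δ
  rw [IsFractionRing.algEquivOfAlgEquiv_algebraMap]
  have : shiftEquiv (k, i) (X w) = if w = (k, i) then X w - 1 else X w := by
    simp [shiftEquiv]
  rw [this]
  split <;> simp [map_sub, map_one]

lemma σ_X (w : ℕ × ℕ) :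
    σ (algebraMap Lam L (X w)) =
      algebraMap Lam L (X (Equiv.swap ((2:ℕ),(1:ℕ)) ((2:ℕ),(2:ℕ)) w)) := by
  unfold σ
  rw [IsFractionRing.algEquivOfAlgEquiv_algebraMap]
  simp [τ]

lemma σ_x21 : σ (x 2 1) = x 2 2 := by
  rw [x, σ_X, Equiv.swap_apply_left]
  rfl
lemma σ_x22 : σ (x 2 2) = x 2 1 := by
  rw [x, σ_X, Equiv.swap_apply_right]
  rfl
lemma σ_x11 : σ (x 1 1) = x 1 1 := by
  rw [x, σ_X, show (Equiv.swap ((2:ℕ),(1:ℕ)) ((2:ℕ),(2:ℕ))) ((1:ℕ),(1:ℕ)) = ((1:ℕ),(1:ℕ)) from by decide]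

lemma δ11_x11 : δ 1 1 (x 1 1) = x 1 1 - 1 := by
  rw [x, δ_X, if_pos rfl]
lemma δ11_x21 : δ 1 1 (x 2 1) = x 2 1 := by
  rw [x, δ_X, if_neg (by decide)]
lemma δ11_x22 : δ 1 1 (x 2 2) = x 2 2 := by
  rw [x, δ_X, if_neg (by decide)]

lemma δσ_comm : (δ 1 1).trans σ = σ.trans (δ 1 1) := by
  apply L_ext
  intro v
  simp only [AlgEquiv.trans_apply]
  rw [δ_X, σ_X]
  have hs : (Equiv.swap ((2:ℕ),(1:ℕ)) ((2:ℕ),(2:ℕ))) ((1:ℕ),(1:ℕ)) = ((1:ℕ),(1:ℕ)) := by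
    decide
  by_cases h : v = (1, 1)
  · subst h
    rw [if_pos rfl, map_sub, map_one, σ_X, hs, δ_X, if_pos rfl]
  · rw [if_neg h, σ_X, δ_X,
      if_neg (fun he => h ((Equiv.swap _ _).injective (he.trans hs.symm)))]

lemma linσ_δ : lin σ * lin (δ 1 1) = lin (δ 1 1) * lin σ := by
  rw [lin_mul_lin, lin_mul_lin, δσ_comm]

lemma aP11 : aP 1 1 = -((x 2 1 - x 1 1) * (x 2 2 - x 1 1)) := by
  unfold aP
  have h1 : (Finset.Icc 1 1).erase 1 = (∅ : Finset ℕ) := by decide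
  have h2 : Finset.Icc (1:ℕ) 2 = {1, 2} := by decide
  rw [h1, h2, Finset.prod_empty, Finset.prod_pair (by norm_num : (1:ℕ) ≠ 2), div_one]

lemma Xp1 : Xp 1 = lin (δ 1 1) * mulOp (aP 1 1) := by
  unfold Xp
  rw [show Finset.Icc (1:ℕ) 1 = {1} by decide, Finset.sum_singleton]
  rfl

lemma Xm1 : Xm 1 = lin (δ 1 1).symm := by
  unfold Xm
  rw [show Finset.Icc (1:ℕ) 1 = {1} by decide, Finset.sum_singleton]
  have ha : aM 1 1 = 1 := by
    unfold aM
    rw [show Finset.Icc (1:ℕ) 0 = ∅ by decide,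
      show (Finset.Icc (1:ℕ) 1).erase 1 = (∅ : Finset ℕ) by decide,
      Finset.prod_empty, Finset.prod_empty, div_one]
  rw [Am, ha, mulOp_one, mul_one]

lemma Xd1 : Xd 1 = mulOp (x 1 1) := by
  unfold Xd
  congr 1
  rw [show Finset.Icc (1:ℕ) 1 = {1} by decide, Finset.sum_singleton,
    show Finset.Icc (1:ℕ) 0 = ∅ by decide, Finset.sum_empty]
  push_cast
  ring

lemma Xd2 : Xd 2 = mulOp (x 2 1 + x 2 2 + 1 - x 1 1) := by
  unfold Xd
  congr 1
  rw [show Finset.Icc (1:ℕ) 2 = {1, 2} by decide,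
    Finset.sum_pair (by norm_num : (1:ℕ) ≠ 2),
    show Finset.Icc (1:ℕ) 1 = {1} by decide, Finset.sum_singleton]
  push_cast
  ring

lemma vand2 : vand 2 = x 2 1 - x 2 2 := by
  unfold vand
  rw [show ((Finset.Icc (1:ℕ) 2 ×ˢ Finset.Icc (1:ℕ) 2).filter (fun p => p.1 < p.2)) =
    {((1:ℕ), (2:ℕ))} by decide, Finset.prod_singleton]

lemma Vop2_eq : Vop 2 = mulOp (x 2 1 - x 2 2) := by
  rw [Vop, vand2]

lemma σ_aP11 : σ (aP 1 1) = aP 1 1 := by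
  rw [aP11, map_neg, map_mul, map_sub, map_sub, σ_x21, σ_x22, σ_x11]
  ring

lemma δ_c : δ 1 1 (x 2 1 - x 2 2) = x 2 1 - x 2 2 := by
  rw [map_sub, δ11_x21, δ11_x22]

lemma σ_c : σ (x 2 1 - x 2 2) = -(x 2 1 - x 2 2) := by
  rw [map_sub, σ_x21, σ_x22]; ring

lemma Xp1_mem : Xp 1 ∈ Ualg 2 :=
  Algebra.subset_adjoin (Or.inl ⟨1, le_refl 1, by norm_num, Or.inl rfl⟩)
lemma Xm1_mem : Xm 1 ∈ Ualg 2 :=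
  Algebra.subset_adjoin (Or.inl ⟨1, le_refl 1, by norm_num, Or.inr rfl⟩)
lemma Xd1_mem : Xd 1 ∈ Ualg 2 :=
  Algebra.subset_adjoin (Or.inr ⟨1, le_refl 1, by norm_num, rfl⟩)
lemma Xd2_mem : Xd 2 ∈ Ualg 2 :=
  Algebra.subset_adjoin (Or.inr ⟨2, by norm_num, le_refl 2, rfl⟩)

lemma linδ_V : lin (δ 1 1) * Vop 2 = Vop 2 * lin (δ 1 1) := by
  rw [Vop2_eq, lin_mul_mulOp, δ_c]

lemma σ_V : lin σ * Vop 2 = -(Vop 2) * lin σ := by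
  rw [Vop2_eq, lin_mul_mulOp, σ_c, mulOp_neg]

lemma V_comm {u : Module.End ℂ L} (hu : u ∈ Ualg 2) : Vop 2 * u = u * Vop 2 := by
  induction hu using Algebra.adjoin_induction with
  | mem g hg =>
    rcases hg with ⟨k, hk1, hk2, hg⟩ | ⟨k, hk1, hk2, rfl⟩
    · have hk : k = 1 := by omega
      subst hk
      rcases hg with rfl | rfl
      · rw [Xp1, ← mul_assoc, ← linδ_V, mul_assoc, mul_assoc]
        congr 1
        rw [Vop2_eq, mulOp_comm]
      · rw [Xm1, comm_symm _ _ linδ_V]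
    · rw [Xd, Vop2_eq, mulOp_comm]
  | algebraMap r => exact (Algebra.commutes r (Vop 2)).symm
  | add a b _ _ ha hb => rw [mul_add, add_mul, ha, hb]
  | mul a b _ _ ha hb => rw [← mul_assoc, ha, mul_assoc, hb, mul_assoc]

lemma σ_comm {u : Module.End ℂ L} (hu : u ∈ Ualg 2) : lin σ * u = u * lin σ := by
  induction hu using Algebra.adjoin_induction with
  | mem g hg =>
    rcases hg with ⟨k, hk1, hk2, hg⟩ | ⟨k, hk1, hk2, rfl⟩
    · have hk : k = 1 := by omega
      subst hk
      rcases hg with rfl | rfl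
      · rw [Xp1, ← mul_assoc, linσ_δ, mul_assoc, lin_mul_mulOp, σ_aP11]
        simp only [mul_assoc]
      · rw [Xm1, comm_symm _ _ linσ_δ.symm]
    · have hk : k = 1 ∨ k = 2 := by omega
      rcases hk with rfl | rfl
      · rw [Xd1, lin_mul_mulOp, σ_x11]
      · rw [Xd2, lin_mul_mulOp]
        have : σ (x 2 1 + x 2 2 + 1 - x 1 1) = x 2 1 + x 2 2 + 1 - x 1 1 := by
          rw [map_sub, map_add, map_add, map_one, σ_x21, σ_x22, σ_x11]
          ring
        rw [this]
  | algebraMap r => exact (Algebra.commutes r (lin σ)).symm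
  | add a b _ _ ha hb => rw [mul_add, add_mul, ha, hb]
  | mul a b _ _ ha hb => rw [← mul_assoc, ha, mul_assoc, hb, mul_assoc]

lemma End_neg_mul (A B : Module.End ℂ L) : -A * B = -(A * B) := by
  ext z
  simp [Module.End.mul_apply]

lemma End_mul_neg (A B : Module.End ℂ L) : A * -B = -(A * B) := by
  ext z
  simp [Module.End.mul_apply]

lemma End_sub_mul (A B C : Module.End ℂ L) : (A - B) * C = A * C - B * C := by
  ext z
  simp [Module.End.mul_apply]

lemma mem_sub {S : Subalgebra ℂ (Module.End ℂ L)} {a b : Module.End ℂ L}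
    (ha : a ∈ S) (hb : b ∈ S) : a - b ∈ S := by
  have h : a - b = a + (-1 : ℂ) • b := by
    ext z
    simp [sub_eq_add_neg]
  rw [h]
  exact S.add_mem ha (S.smul_mem hb _)

lemma Xm1_Xp1 : Xm 1 * Xp 1 = mulOp (aP 1 1) := by
  rw [Xm1, Xp1, ← mul_assoc, symm_mul_lin, one_mul]

lemma smul_mulOp (r : ℂ) (b : L) :
    r • mulOp b = mulOp (algebraMap ℂ L r * b) := by
  ext z
  rw [LinearMap.smul_apply]
  show r • (b * z) = (algebraMap ℂ L r * b) * z
  rw [mul_assoc]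
  exact Algebra.smul_def r (b * z)

lemma one_eq_mulOp : (1 : Module.End ℂ L) = mulOp 1 := mulOp_one.symm

lemma Vsq_mem : Vop 2 * Vop 2 ∈ Ualg 2 := by
  have key : Vop 2 * Vop 2 =
      (4:ℂ) • (Xm 1 * Xp 1) + (Xd 2 + Xd 1 - 1) * (Xd 2 + Xd 1 - 1)
        - (4:ℂ) • (Xd 1 * (Xd 2 + Xd 1 - 1)) + (4:ℂ) • (Xd 1 * Xd 1) := by
    rw [Xm1_Xp1, aP11, Xd1, Xd2, Vop2_eq, one_eq_mulOp]
    rw [← mulOp_add, ← mulOp_sub, mulOp_mul, mulOp_mul, mulOp_mul, mulOp_mul,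
      smul_mulOp, smul_mulOp, smul_mulOp, ← mulOp_add, ← mulOp_sub, ← mulOp_add]
    congr 1
    have h4 : algebraMap ℂ L 4 = 4 := by
      rw [map_ofNat]
    rw [h4]
    ring
  rw [key]
  have hP : Xd 2 + Xd 1 - 1 ∈ Ualg 2 :=
    mem_sub ((Ualg 2).add_mem Xd2_mem Xd1_mem) ((Ualg 2).one_mem)
  exact (Ualg 2).add_mem
    (mem_sub
      ((Ualg 2).add_mem ((Ualg 2).smul_mem ((Ualg 2).mul_mem Xm1_mem Xp1_mem) _)
        ((Ualg 2).mul_mem hP hP))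
      ((Ualg 2).smul_mem ((Ualg 2).mul_mem Xd1_mem hP) _))
    ((Ualg 2).smul_mem ((Ualg 2).mul_mem Xd1_mem Xd1_mem) _)

lemma c_ne : (x 2 1 - x 2 2 : L) ≠ 0 := by
  intro h
  rw [sub_eq_zero] at h
  have hinj := IsFractionRing.injective Lam L
  have : (X ((2:ℕ),(1:ℕ)) : Lam) = X ((2:ℕ),(2:ℕ)) := hinj h
  have h2 := MvPolynomial.X_injective this
  simp at h2

lemma V_cancel {v : Module.End ℂ L} (h : v * Vop 2 = 0) : v = 0 := by
  have : v = v * Vop 2 * mulOp (x 2 1 - x 2 2)⁻¹ := by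
    rw [Vop2_eq, mul_assoc, mulOp_mul, mul_inv_cancel₀ c_ne, mulOp_one, mul_one]
  rw [this, h, zero_mul]

lemma key_inter {u v : Module.End ℂ L} (hu : u ∈ Ualg 2) (hv : v ∈ Ualg 2)
    (h : u = v * Vop 2) : u = 0 ∧ v = 0 := by
  have h1 : lin σ * u = u * lin σ := σ_comm hu
  have h2 : lin σ * (v * Vop 2) = -(v * Vop 2) * lin σ := by
    rw [← mul_assoc, σ_comm hv, mul_assoc, σ_V, End_neg_mul, End_mul_neg,
      End_neg_mul, mul_assoc]
  have h3 : u * lin σ = -u * lin σ := by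
    conv_lhs => rw [← h1, h, h2, ← h]
  have h4 : u = -u := by
    have := congrArg (fun A => A * lin σ.symm) h3
    simpa [mul_assoc, lin_mul_symm] using this
  have hu0 : u = 0 := by
    ext z
    have hz : u z = -(u z) := by
      have := LinearMap.congr_fun h4 z
      rwa [LinearMap.neg_apply] at this
    have h2z : (2 : L) * u z = 0 := by
      rw [two_mul]
      nth_rewrite 2 [hz]
      exact add_neg_cancel _
    have := (mul_eq_zero.mp h2z).resolve_left (two_ne_zero)
    simpa using this
  refine ⟨hu0, V_cancel ?_⟩
  rw [← h, hu0]


end Agl2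

/-- `𝒜(gl_2)` is the internal direct sum of the subspaces `U_2` and
`U_2·𝒱_2`: every element of `𝒜(gl_2)` is (uniquely) of the form `u + v ∘ 𝒱_2` with
`u, v ∈ U_2`, and `U_2 ∩ U_2·𝒱_2 = {0}`. -/
theorem Agl2_direct_sum_decomposition :
    ((Agl 2 : Set (Module.End ℂ L)) =
      {w | ∃ u ∈ Ualg 2, ∃ v ∈ Ualg 2, w = u + v * Vop 2}) ∧
    ((Ualg 2 : Set (Module.End ℂ L)) ∩ {w | ∃ v ∈ Ualg 2, w = v * Vop 2} = {0}) ∧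
    (∀ u ∈ Ualg 2, ∀ v ∈ Ualg 2, ∀ u' ∈ Ualg 2, ∀ v' ∈ Ualg 2,
      u + v * Vop 2 = u' + v' * Vop 2 → u = u' ∧ v = v') := by
  have hUle : Ualg 2 ≤ Agl 2 := Algebra.adjoin_mono Set.subset_union_left
  have hV : Vop 2 ∈ Agl 2 :=
    Algebra.subset_adjoin (Or.inr ⟨2, le_refl 2, le_refl 2, rfl⟩)
  refine ⟨?_, ?_, ?_⟩
  · ext w
    simp only [SetLike.mem_coe, Set.mem_setOf_eq]
    constructor
    · intro hw
      induction hw using Algebra.adjoin_induction with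
      | mem g hg =>
        rcases hg with hg | ⟨k, hk1, hk2, rfl⟩
        · exact ⟨g, Algebra.subset_adjoin hg, 0, zero_mem _, by
            rw [zero_mul, add_zero]⟩
        · have hk : k = 2 := by omega
          subst hk
          exact ⟨0, zero_mem _, 1, one_mem _, by rw [one_mul, zero_add]⟩
      | algebraMap r =>
        exact ⟨algebraMap ℂ _ r, Subalgebra.algebraMap_mem _ r, 0, zero_mem _, by
          rw [zero_mul, add_zero]⟩
      | add a b ha hb iha ihb =>
        obtain ⟨u, hu, v, hv, rfl⟩ := iha
        obtain ⟨u', hu', v', hv', rfl⟩ := ihb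
        refine ⟨u + u', (Ualg 2).add_mem hu hu', v + v',
          (Ualg 2).add_mem hv hv', ?_⟩
        rw [add_mul]
        abel
      | mul a b ha hb iha ihb =>
        obtain ⟨u, hu, v, hv, rfl⟩ := iha
        obtain ⟨u', hu', v', hv', rfl⟩ := ihb
        have c1 : Vop 2 * u' = u' * Vop 2 := Agl2.V_comm hu'
        have c2 : Vop 2 * v' = v' * Vop 2 := Agl2.V_comm hv'
        refine ⟨u * u' + v * v' * (Vop 2 * Vop 2),
          (Ualg 2).add_mem ((Ualg 2).mul_mem hu hu')
            ((Ualg 2).mul_mem ((Ualg 2).mul_mem hv hv') Agl2.Vsq_mem),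
          u * v' + v * u',
          (Ualg 2).add_mem ((Ualg 2).mul_mem hu hv') ((Ualg 2).mul_mem hv hu'),
          ?_⟩
        have e1 : v * Vop 2 * u' = v * u' * Vop 2 := by
          rw [mul_assoc, c1, ← mul_assoc]
        have e2 : v * Vop 2 * (v' * Vop 2) = v * v' * (Vop 2 * Vop 2) := by
          rw [mul_assoc, ← mul_assoc (Vop 2), c2, mul_assoc, ← mul_assoc,
            ← mul_assoc]
        have e0 : (u + v * Vop 2) * (u' + v' * Vop 2)
            = u * u' + u * (v' * Vop 2) + (v * Vop 2 * u'
              + v * Vop 2 * (v' * Vop 2)) := by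
          rw [add_mul, mul_add, mul_add]
        rw [e0, e1, e2, ← mul_assoc u v' (Vop 2), add_mul]
        abel
    · rintro ⟨u, hu, v, hv, rfl⟩
      exact (Agl 2).add_mem (hUle hu) ((Agl 2).mul_mem (hUle hv) hV)
  · ext w
    simp only [Set.mem_inter_iff, SetLike.mem_coe, Set.mem_setOf_eq,
      Set.mem_singleton_iff]
    constructor
    · rintro ⟨hw, v, hv, rfl⟩
      exact (Agl2.key_inter hw hv rfl).1
    · rintro rfl
      exact ⟨zero_mem _, 0, zero_mem _, by rw [zero_mul]⟩
  · intro u hu v hv u' hu' v' hv' h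
    have hd : u - u' = (v' - v) * Vop 2 := by
      rw [Agl2.End_sub_mul]
      calc u - u' = (u + v * Vop 2) - v * Vop 2 - u' := by abel
        _ = (u' + v' * Vop 2) - v * Vop 2 - u' := by rw [h]
        _ = v' * Vop 2 - v * Vop 2 := by abel
    have hk := Agl2.key_inter (Agl2.mem_sub hu hu') (Agl2.mem_sub hv' hv) hd
    constructor
    · exact sub_eq_zero.mp hk.1
    · exact (sub_eq_zero.mp hk.2).symm
end
end

section
/- For n = 2, set c = X_{11} + X_{22} and C = X_{11}² + X_1⁺ ∘ X_1⁻ + X_1⁻ ∘ X_1⁺ + X_{22}² in End_ℂ(L). Then c = m_{x_{21}+x_{22}+1}, C = m_{x_{21}²+x_{22}²+x_{21}+x_{22}}, and −c² + 2C + 1 = 𝒱_2² (where 1 denotes the identity operator). In particular 𝒱_2² equals the image of a central element of U(gl_2) under the Gelfand–Tsetlin realization. -/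
open scoped BigOperators
open MvPolynomial

noncomputable section

set_option maxHeartbeats 1000000
set_option synthInstance.maxHeartbeats 400000

lemma mulOp_add (a b : L) : mulOp (a + b) = mulOp a + mulOp b := by
  ext f; simp [mulOp, add_mul]

lemma mulOp_mul (a b : L) : mulOp (a * b) = mulOp a * mulOp b := by
  ext f; simp [mulOp, mul_assoc, Module.End.mul_apply]

lemma mulOp_one : mulOp (1 : L) = 1 := by
  ext f; simp [mulOp]

lemma mulOp_sq (a : L) : mulOp a ^ 2 = mulOp (a ^ 2) := by
  rw [sq, sq, mulOp_mul]

lemma δ_x (k i l j : ℕ) :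
    δ k i (x l j) = if (l, j) = (k, i) then x l j - 1 else x l j := by
  unfold δ x
  rw [IsFractionRing.algEquivOfAlgEquiv_algebraMap]
  show algebraMap Lam L (aeval _ (X (l, j))) = _
  by_cases h : (l, j) = (k, i) <;> simp [h, x]

lemma δ_symm_x (k i l j : ℕ) :
    (δ k i).symm (x l j) = if (l, j) = (k, i) then x l j + 1 else x l j := by
  unfold δ x
  rw [IsFractionRing.algEquivOfAlgEquiv_symm, IsFractionRing.algEquivOfAlgEquiv_algebraMap]
  show algebraMap Lam L (aeval _ (X (l, j))) = _
  by_cases h : (l, j) = (k, i) <;> simp [h, shiftEquiv, x]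

lemma conj_mulOp (e : L ≃ₐ[ℂ] L) (a : L) :
    lin e * mulOp a * lin e.symm = mulOp (e a) := by
  ext f
  simp [lin, mulOp, Module.End.mul_apply, map_mul]

lemma lin_symm_mul (e : L ≃ₐ[ℂ] L) : lin e.symm * lin e = 1 := by
  ext f; simp [lin, Module.End.mul_apply]

lemma hXd1 : Xd 1 = mulOp (x 1 1) := by
  unfold Xd
  norm_num

lemma hXd2 : Xd 2 = mulOp (x 2 1 + x 2 2 + 1 - x 1 1) := by
  unfold Xd
  have h2 : Finset.Icc 1 2 = ({1, 2} : Finset ℕ) := by decide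
  rw [h2]
  norm_num [Finset.sum_insert, Finset.sum_singleton]
  congr 1
  ring

lemma haP : aP 1 1 = -((x 2 1 - x 1 1) * (x 2 2 - x 1 1)) := by
  unfold aP
  have h2 : Finset.Icc 1 2 = ({1, 2} : Finset ℕ) := by decide
  have h1 : (Finset.Icc 1 1).erase 1 = (∅ : Finset ℕ) := by decide
  rw [h2, h1]
  norm_num [Finset.prod_insert, Finset.prod_singleton]

lemma haM : aM 1 1 = 1 := by
  unfold aM
  have h0 : Finset.Icc 1 0 = (∅ : Finset ℕ) := by decide
  have h1 : (Finset.Icc 1 1).erase 1 = (∅ : Finset ℕ) := by decide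
  rw [h0, h1]
  simp

lemma hXp1 : Xp 1 = lin (δ 1 1) * mulOp (aP 1 1) := by
  unfold Xp
  rw [show Finset.Icc 1 1 = ({1} : Finset ℕ) by decide, Finset.sum_singleton, Ap]

lemma hXm1 : Xm 1 = lin (δ 1 1).symm := by
  unfold Xm
  rw [show Finset.Icc 1 1 = ({1} : Finset ℕ) by decide, Finset.sum_singleton, Am, haM,
    mulOp_one, mul_one]

lemma hPM : Xp 1 * Xm 1 =
    mulOp (-((x 2 1 - (x 1 1 - 1)) * (x 2 2 - (x 1 1 - 1)))) := by
  rw [hXp1, hXm1, conj_mulOp, haP]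
  congr 1
  rw [map_neg, map_mul, map_sub, map_sub, δ_x, δ_x, δ_x]
  norm_num

lemma hMP : Xm 1 * Xp 1 = mulOp (-((x 2 1 - x 1 1) * (x 2 2 - x 1 1))) := by
  rw [hXp1, hXm1, ← mul_assoc, lin_symm_mul, one_mul, haP]

lemma hvand : vand 2 = x 2 1 - x 2 2 := by
  unfold vand
  rw [show (Finset.Icc 1 2 ×ˢ Finset.Icc 1 2).filter (fun p => p.1 < p.2) =
    ({(1, 2)} : Finset (ℕ × ℕ)) by decide]
  simp

lemma hC : Xd 1 ^ 2 + Xp 1 * Xm 1 + Xm 1 * Xp 1 + Xd 2 ^ 2 =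
    mulOp (x 2 1 ^ 2 + x 2 2 ^ 2 + x 2 1 + x 2 2) := by
  rw [hXd1, hXd2, hPM, hMP, mulOp_sq, mulOp_sq, ← mulOp_add, ← mulOp_add, ← mulOp_add]
  congr 1
  ring

/-- for `n = 2`, with `c = X_{11} + X_{22}` and
`C = X_{11}² + X_1⁺X_1⁻ + X_1⁻X_1⁺ + X_{22}²`, we have
`c = m_{x_{21}+x_{22}+1}`, `C = m_{x_{21}²+x_{22}²+x_{21}+x_{22}}`, and
`−c² + 2C + 1 = 𝒱_2²`. -/
theorem gelfand_invariants_and_vand_squared :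
    Xd 1 + Xd 2 = mulOp (x 2 1 + x 2 2 + 1) ∧
    Xd 1 ^ 2 + Xp 1 * Xm 1 + Xm 1 * Xp 1 + Xd 2 ^ 2 =
      mulOp (x 2 1 ^ 2 + x 2 2 ^ 2 + x 2 1 + x 2 2) ∧
    -(Xd 1 + Xd 2) ^ 2 +
        2 * (Xd 1 ^ 2 + Xp 1 * Xm 1 + Xm 1 * Xp 1 + Xd 2 ^ 2) + 1 =
      (Vop 2) ^ 2 := by
  have hc : Xd 1 + Xd 2 = mulOp (x 2 1 + x 2 2 + 1) := by
    rw [hXd1, hXd2, ← mulOp_add]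
    congr 1
    ring
  refine ⟨hc, hC, ?_⟩
  rw [hc, hC, Vop, hvand, mulOp_sq, mulOp_sq,
    show (2 : Module.End ℂ L) = mulOp 2 by rw [show (2:L) = 1 + 1 by norm_num, mulOp_add, mulOp_one]; norm_num,
    show (1 : Module.End ℂ L) = mulOp 1 from mulOp_one.symm,
    ← mulOp_mul]
  have hneg : ∀ a : L, -mulOp a = mulOp (-a) := by
    intro a; ext f; exact (neg_mul a f).symm
  rw [hneg, ← mulOp_add, ← mulOp_add]
  congr 1
  ring
end
end

section
/- Both m_{1/x} and m_{1/(x−1)} belong to U_f. -/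
set_option synthInstance.maxHeartbeats 1000000
set_option maxHeartbeats 1000000

noncomputable section

/-- The polynomial ring `ℂ[x]`. -/
abbrev Pc : Type := Polynomial ℂ

/-- `L = ℂ(x)`, the field of rational functions in one variable. -/
abbrev L1 : Type := FractionRing Pc

/-- The variable `x` as an element of `L`. -/
def x1 : L1 := algebraMap Pc L1 Polynomial.X

/-- The algebra automorphism of `ℂ[x]` with `x ↦ x − 1`. -/
def shift1 : Pc ≃ₐ[ℂ] Pc :=
  AlgEquiv.ofAlgHom
    (Polynomial.aeval (Polynomial.X - 1))
    (Polynomial.aeval (Polynomial.X + 1))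
    (by apply Polynomial.algHom_ext; simp)
    (by apply Polynomial.algHom_ext; simp)

/-- The ℂ-algebra automorphism `δ` of `L = ℂ(x)` with `δ(x) = x − 1`. -/
def δ1 : L1 ≃ₐ[ℂ] L1 := IsFractionRing.algEquivOfAlgEquiv shift1

/-- Multiplication by `a ∈ L` as a ℂ-linear endomorphism `m_a` of `L`. -/
def mul1 (a : L1) : Module.End ℂ L1 := LinearMap.mulLeft ℂ a

/-- The operator `X = δ ∘ m_{f(x)/x}`. -/
def Xop (f : Pc) : Module.End ℂ L1 :=
  δ1.toLinearMap * mul1 (algebraMap Pc L1 f / x1)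

/-- The operator `Y = δ^{-1}`. -/
def Yop : Module.End ℂ L1 := δ1.symm.toLinearMap

/-- `U_f`, the unital ℂ-subalgebra of `End_ℂ(L)` generated by the polynomial
multiplication operators together with `X` and `Y`. -/
def Uf (f : Pc) : Subalgebra ℂ (Module.End ℂ L1) :=
  Algebra.adjoin ℂ
    ({u | ∃ p : Pc, u = mul1 (algebraMap Pc L1 p)} ∪ {Xop f, Yop})

open Polynomial

lemma mul1_add (u v : L1) : mul1 (u + v) = mul1 u + mul1 v := by
  ext w; simp [mul1, add_mul]

lemma mul1_sub (u v : L1) : mul1 (u - v) = mul1 u - mul1 v := by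
  ext w; simp [mul1, sub_mul]

lemma mul1_smul (c : ℂ) (v : L1) : mul1 (c • v) = c • mul1 v := by
  ext w; simp [mul1, smul_mul_assoc]

lemma shift1_X : shift1 Polynomial.X = Polynomial.X - 1 := by
  simp [shift1]

lemma δ1_algebraMap (p : Pc) :
    δ1 (algebraMap Pc L1 p) = algebraMap Pc L1 (shift1 p) := by
  simp [δ1]

/-- Key step: if `m_{F/(x-a)} ∈ U_f` and `F(a) ≠ 0`, then `m_{1/(x-a)} ∈ U_f`. -/
lemma key (f F : Pc) (a : ℂ) (hFa : F.eval a ≠ 0)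
    (hmem : mul1 (algebraMap Pc L1 F / algebraMap Pc L1 (Polynomial.X - Polynomial.C a)) ∈ Uf f) :
    mul1 (1 / algebraMap Pc L1 (Polynomial.X - Polynomial.C a)) ∈ Uf f := by
  obtain ⟨q, hq⟩ := Polynomial.X_sub_C_dvd_sub_C_eval (a := a) (p := F)
  set d : L1 := algebraMap Pc L1 (Polynomial.X - Polynomial.C a) with hd
  have hd0 : d ≠ 0 := by
    rw [hd]
    simp only [ne_eq, map_eq_zero_iff _ (IsFractionRing.injective Pc L1)]
    exact Polynomial.X_sub_C_ne_zero a
  have hF : algebraMap Pc L1 F / d - algebraMap Pc L1 q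
      = (F.eval a) • (1 / d) := by
    have hF2 : (F : Pc) = (Polynomial.X - Polynomial.C a) * q + Polynomial.C (F.eval a) := by
      linear_combination hq
    have : algebraMap Pc L1 F = d * algebraMap Pc L1 q
        + algebraMap ℂ L1 (F.eval a) := by
      rw [hF2, map_add, map_mul, hd]
      congr 1
      rw [IsScalarTower.algebraMap_apply ℂ Pc L1]
      simp
    rw [this, Algebra.smul_def]
    field_simp
    ring
  have h1 : mul1 ((F.eval a) • (1 / d)) ∈ Uf f := by
    rw [← hF, mul1_sub]
    exact sub_mem hmem (Algebra.subset_adjoin (Or.inl ⟨q, rfl⟩))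
  have : mul1 (1 / d) = (F.eval a)⁻¹ • mul1 ((F.eval a) • (1 / d)) := by
    rw [mul1_smul, smul_smul, inv_mul_cancel₀ hFa, one_smul]
  rw [this]
  exact SMulMemClass.smul_mem _ h1

lemma YX (f : Pc) : Yop * Xop f = mul1 (algebraMap Pc L1 f / x1) := by
  ext v
  simp [Yop, Xop, Module.End.mul_apply]

lemma XY (f : Pc) :
    Xop f * Yop = mul1 (algebraMap Pc L1 (shift1 f) / (x1 - 1)) := by
  ext v
  have : δ1 (algebraMap Pc L1 f / x1 * δ1.symm v)
      = algebraMap Pc L1 (shift1 f) / (x1 - 1) * v := by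
    rw [map_mul, AlgEquiv.apply_symm_apply, map_div₀, δ1_algebraMap, x1, δ1_algebraMap,
      shift1_X]
    simp [x1]
  simpa [Xop, Yop, mul1, Module.End.mul_apply, LinearMap.mulLeft_apply] using this

/-- both `m_{1/x}` and `m_{1/(x−1)}` belong to `U_f`. -/
theorem inv_x_and_inv_x_sub_one_mem_Uf (f : Pc) (hf : Polynomial.eval 0 f ≠ 0) :
    mul1 (1 / x1) ∈ Uf f ∧ mul1 (1 / (x1 - 1)) ∈ Uf f := by
  have hXmem : Xop f ∈ Uf f := Algebra.subset_adjoin (Or.inr (by simp))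
  have hYmem : Yop ∈ Uf f := Algebra.subset_adjoin (Or.inr (by simp))
  have hx0 : x1 = algebraMap Pc L1 (Polynomial.X - Polynomial.C (0 : ℂ)) := by
    simp [x1]
  have hx1 : x1 - 1 = algebraMap Pc L1 (Polynomial.X - Polynomial.C (1 : ℂ)) := by
    simp [x1]
  constructor
  · rw [hx0]
    refine key f f 0 hf ?_
    rw [← hx0, ← YX f]
    exact mul_mem hYmem hXmem
  · rw [hx1]
    refine key f (shift1 f) 1 ?_ ?_
    · rw [show shift1 f = Polynomial.aeval (Polynomial.X - 1 : Pc) f from rfl,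
        ← Polynomial.comp_eq_aeval, Polynomial.eval_comp]
      simpa using hf
    · rw [← hx1, ← XY f]
      exact mul_mem hXmem hYmem
end
end
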